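/- With f : ℍ → ℝ⁴ the coordinate isomorphism and π : CL(ℝ⁴) → ℍ as defined, for any quaternions a₁, ..., a_r: π(f(a₁)·f(a₂)···f(a_r)) = a₁·conj(a₂)·a₃·conj(a₄)···, i.e., the Clifford product of the vectors f(aₗ) projects to the alternating product where even-indexed factors are conjugated. -/

import Mathlib

open Quaternion

/-- The positive definite quadratic form on `ℝ⁴`. -/
noncomputable def Q4 : QuadraticForm ℝ (Fin 4 → ℝ) :=
  QuadraticMap.weightedSumSquares ℝ (fun _ : Fin 4 => (1 : ℝ))

/-- The standard basis vectors of `ℝ⁴` as vectors in the Clifford algebra. -/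
noncomputable def e (i : Fin 4) : CliffordAlgebra Q4 :=
  CliffordAlgebra.ι Q4 (Pi.single i 1)

def qi : ℍ[ℝ] := ⟨0, 1, 0, 0⟩
def qj : ℍ[ℝ] := ⟨0, 0, 1, 0⟩
def qk : ℍ[ℝ] := ⟨0, 0, 0, 1⟩

/-- The coordinate map `f : ℍ → ℝ⁴ ⊆ CL(ℝ⁴)`. -/
noncomputable def fQ (a : ℍ[ℝ]) : CliffordAlgebra Q4 :=
  CliffordAlgebra.ι Q4 ![a.re, a.imI, a.imJ, a.imK]

lemma Q4_single (i : Fin 4) : Q4 (Pi.single i 1) = 1 := by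
  rw [Q4, QuadraticMap.weightedSumSquares_apply]; simp [Pi.single_apply]

lemma e_sq (i : Fin 4) : e i * e i = 1 := by
  rw [e, CliffordAlgebra.ι_sq_scalar, Q4_single, map_one]

lemma e_sq' (i : Fin 4) (x : CliffordAlgebra Q4) : e i * (e i * x) = x := by
  rw [← mul_assoc, e_sq, one_mul]

lemma e_anticomm {i j : Fin 4} (h : i ≠ j) : e j * e i = -(e i * e j) := by
  have h2 := CliffordAlgebra.ι_mul_ι_add_swap (Q := Q4) (Pi.single i 1) (Pi.single j 1)
  have hp : QuadraticMap.polar Q4 (Pi.single i 1) (Pi.single j 1) = 0 := by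
    rw [QuadraticMap.polar, Q4]
    simp only [QuadraticMap.weightedSumSquares_apply, one_smul, Pi.add_apply, Pi.single_apply,
      Fin.sum_univ_four]
    fin_cases i <;> fin_cases j <;> simp_all
  rw [hp, map_zero] at h2
  rw [e, e]
  linear_combination (norm := abel) h2

lemma e_anticomm' {i j : Fin 4} (h : i ≠ j) (x : CliffordAlgebra Q4) :
    e j * (e i * x) = -(e i * (e j * x)) := by
  rw [← mul_assoc, e_anticomm h, ← mul_assoc, neg_mul]

lemma e10 : e 1 * e 0 = -(e 0 * e 1) := e_anticomm (by decide)
lemma e20 : e 2 * e 0 = -(e 0 * e 2) := e_anticomm (by decide)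
lemma e30 : e 3 * e 0 = -(e 0 * e 3) := e_anticomm (by decide)
lemma e21 : e 2 * e 1 = -(e 1 * e 2) := e_anticomm (by decide)
lemma e31 : e 3 * e 1 = -(e 1 * e 3) := e_anticomm (by decide)
lemma e32 : e 3 * e 2 = -(e 2 * e 3) := e_anticomm (by decide)
lemma e10' (x) : e 1 * (e 0 * x) = -(e 0 * (e 1 * x)) := e_anticomm' (by decide) x
lemma e20' (x) : e 2 * (e 0 * x) = -(e 0 * (e 2 * x)) := e_anticomm' (by decide) x
lemma e30' (x) : e 3 * (e 0 * x) = -(e 0 * (e 3 * x)) := e_anticomm' (by decide) x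
lemma e21' (x) : e 2 * (e 1 * x) = -(e 1 * (e 2 * x)) := e_anticomm' (by decide) x
lemma e31' (x) : e 3 * (e 1 * x) = -(e 1 * (e 3 * x)) := e_anticomm' (by decide) x
lemma e32' (x) : e 3 * (e 2 * x) = -(e 2 * (e 3 * x)) := e_anticomm' (by decide) x

/-- sanity check of the rewriting system -/
example : (e 0 * e 1) * (e 0 * (e 2 * e 3)) = -(e 1 * (e 2 * e 3)) := by
  simp only [mul_assoc, mul_neg, neg_mul, neg_neg, mul_one, one_mul,
    e_sq, e_sq', e10, e20, e30, e21, e31, e32, e10', e20', e30', e21', e31', e32']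


noncomputable def Wq (p q : ℍ[ℝ]) : CliffordAlgebra Q4 :=
  ((p.re + q.re)/2) • 1 + ((q.re - p.re)/2) • (e 0 * (e 1 * (e 2 * e 3)))
  + (-(p.imI + q.imI)/2) • (e 2 * e 3) + ((q.imI - p.imI)/2) • (e 0 * e 1)
  + ((p.imJ + q.imJ)/2) • (e 1 * e 3) + ((q.imJ - p.imJ)/2) • (e 0 * e 2)
  + (-(p.imK + q.imK)/2) • (e 1 * e 2) + ((q.imK - p.imK)/2) • (e 0 * e 3)

lemma fQ_expand (a : ℍ[ℝ]) :
    fQ a = a.re • e 0 + a.imI • e 1 + a.imJ • e 2 + a.imK • e 3 := by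
  rw [fQ, e, e, e, e, ← map_smul, ← map_smul, ← map_smul, ← map_smul, ← map_add, ← map_add,
    ← map_add]
  congr 1
  ext i
  fin_cases i <;> simp [Pi.single_apply]

lemma Wmul (p q p' q' : ℍ[ℝ]) : Wq p q * Wq p' q' = Wq (p * p') (q * q') := by
  simp only [Wq, Quaternion.re_mul, Quaternion.imI_mul, Quaternion.imJ_mul, Quaternion.imK_mul]
  simp only [mul_add, add_mul, smul_mul_assoc, mul_smul_comm, smul_smul, mul_one, one_mul,
    mul_assoc, mul_neg, neg_mul, neg_neg, smul_neg,
    e_sq, e_sq', e10, e20, e30, e21, e31, e32, e10', e20', e30', e21', e31', e32']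
  module

lemma e0_fQ (a : ℍ[ℝ]) : e 0 * fQ a = Wq (star a) a := by
  rw [fQ_expand]
  simp only [Wq, Quaternion.re_star, Quaternion.imI_star, Quaternion.imJ_star,
    Quaternion.imK_star]
  simp only [mul_add, add_mul, smul_mul_assoc, mul_smul_comm, smul_smul, mul_one, one_mul,
    mul_assoc, mul_neg, neg_mul, neg_neg, smul_neg,
    e_sq, e_sq', e10, e20, e30, e21, e31, e32, e10', e20', e30', e21', e31', e32']
  module

lemma fQ_eq (a : ℍ[ℝ]) : fQ a = Wq a (star a) * e 0 := by
  rw [fQ_expand]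
  simp only [Wq, Quaternion.re_star, Quaternion.imI_star, Quaternion.imJ_star,
    Quaternion.imK_star]
  simp only [mul_add, add_mul, smul_mul_assoc, mul_smul_comm, smul_smul, mul_one, one_mul,
    mul_assoc, mul_neg, neg_mul, neg_neg, smul_neg,
    e_sq, e_sq', e10, e20, e30, e21, e31, e32, e10', e20', e30', e21', e31', e32']
  module

lemma Wq_mul_e0 (p q : ℍ[ℝ]) : Wq p q * e 0 =
    ((p.re + q.re)/2) • e 0 + (-(q.re - p.re)/2) • (e 1 * (e 2 * e 3))
  + (-(p.imI + q.imI)/2) • (e 0 * (e 2 * e 3)) + (-(q.imI - p.imI)/2) • e 1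
  + ((p.imJ + q.imJ)/2) • (e 0 * (e 1 * e 3)) + (-(q.imJ - p.imJ)/2) • e 2
  + (-(p.imK + q.imK)/2) • (e 0 * (e 1 * e 2)) + (-(q.imK - p.imK)/2) • e 3 := by
  simp only [Wq]
  simp only [mul_add, add_mul, smul_mul_assoc, mul_smul_comm, smul_smul, mul_one, one_mul,
    mul_assoc, mul_neg, neg_mul, neg_neg, smul_neg,
    e_sq, e_sq', e10, e20, e30, e21, e31, e32, e10', e20', e30', e21', e31', e32']
  module


lemma ofFn_prod_succ {M : Type*} [Monoid M] {n : ℕ} (g : Fin (n + 1) → M) :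
    (List.ofFn g).prod = (List.ofFn fun i : Fin n => g i.castSucc).prod * g (Fin.last n) := by
  rw [List.ofFn_succ', List.prod_concat]

lemma key : ∀ (s : ℕ) (a : Fin (s + 1) → ℍ[ℝ]),
    (List.ofFn fun l : Fin (s + 1) => fQ (a l)).prod =
      Wq ((List.ofFn fun l : Fin (s + 1) => if Even (l : ℕ) then a l else star (a l)).prod)
         ((List.ofFn fun l : Fin (s + 1) => if Even (l : ℕ) then star (a l) else a l).prod) *
        (if Even s then e 0 else 1) := by
  intro s
  induction s with
  | zero =>
    intro a
    simp only [List.ofFn_succ, List.ofFn_zero, List.prod_cons, List.prod_nil, mul_one]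
    norm_num
    exact fQ_eq (a 0)
  | succ n ih =>
    intro a
    rw [ofFn_prod_succ (fun l : Fin (n + 1 + 1) => fQ (a l)),
      ofFn_prod_succ (fun l : Fin (n + 1 + 1) => if Even (l : ℕ) then a l else star (a l)),
      ofFn_prod_succ (fun l : Fin (n + 1 + 1) => if Even (l : ℕ) then star (a l) else a l)]
    simp only [Fin.coe_castSucc, Fin.val_last]
    rw [ih (fun i => a i.castSucc)]
    rcases Nat.even_or_odd n with hn | hn
    · have hn1 : ¬ Even (n + 1) := by simp [Nat.even_add_one, hn]
      rw [if_pos hn, if_neg hn1, if_neg hn1, if_neg hn1]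
      rw [mul_assoc, e0_fQ, Wmul, mul_one]
    · have hn' : ¬ Even n := Nat.not_even_iff_odd.mpr hn
      have hn1 : Even (n + 1) := by simpa [Nat.even_add_one] using hn'
      rw [if_neg hn', if_pos hn1, if_pos hn1, if_pos hn1]
      rw [mul_one, fQ_eq (a (Fin.last (n + 1))), ← mul_assoc, Wmul]

/-- The projection of a Clifford product of vectors `f(a₁) ⋯ f(a_r)` is the alternating
quaternion product `a₁ ⬝ conj a₂ ⬝ a₃ ⬝ conj a₄ ⋯`. -/
theorem pi_clifford_product_of_vectors (π : CliffordAlgebra Q4 →ₗ[ℝ] ℍ[ℝ])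
    (h1 : π 1 = 1) (h2 : π (e 0) = 1) (h3 : π (e 1 * e 2 * e 3) = 1)
    (h4 : π (e 0 * e 1 * e 2 * e 3) = -1)
    (h5 : π (e 1) = qi) (h6 : π (e 0 * e 1) = -qi) (h7 : π (e 2 * e 3) = -qi)
    (h8 : π (e 0 * e 2 * e 3) = -qi)
    (h9 : π (e 2) = qj) (h10 : π (e 0 * e 2) = -qj) (h11 : π (e 1 * e 3) = qj)
    (h12 : π (e 0 * e 1 * e 3) = qj)
    (h13 : π (e 3) = qk) (h14 : π (e 0 * e 3) = -qk) (h15 : π (e 1 * e 2) = -qk)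
    (h16 : π (e 0 * e 1 * e 2) = -qk) :
    ∀ (r : ℕ), 0 < r → ∀ a : Fin r → ℍ[ℝ],
      π (List.ofFn fun l : Fin r => fQ (a l)).prod =
        (List.ofFn fun l : Fin r => if Even (l : ℕ) then a l else star (a l)).prod := by
  have h4' : π (e 0 * (e 1 * (e 2 * e 3))) = -1 := by rw [← mul_assoc, ← mul_assoc]; exact h4
  have h3' : π (e 1 * (e 2 * e 3)) = 1 := by rw [← mul_assoc]; exact h3
  have h8' : π (e 0 * (e 2 * e 3)) = -qi := by rw [← mul_assoc]; exact h8
  have h12' : π (e 0 * (e 1 * e 3)) = qj := by rw [← mul_assoc]; exact h12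
  have h16' : π (e 0 * (e 1 * e 2)) = -qk := by rw [← mul_assoc]; exact h16
  have piW : ∀ p q : ℍ[ℝ], π (Wq p q) = p := by
    intro p q
    simp only [Wq, map_add, map_smul]
    rw [h1, h4', h7, h6, h11, h10, h15, h14]
    refine Quaternion.ext _ _ ?_ ?_ ?_ ?_ <;> simp only [Quaternion.re_add, Quaternion.imI_add, Quaternion.imJ_add, Quaternion.imK_add, Quaternion.re_neg, Quaternion.imI_neg, Quaternion.imJ_neg, Quaternion.imK_neg, Quaternion.re_smul, Quaternion.imI_smul, Quaternion.imJ_smul, Quaternion.imK_smul] <;> simp [qi, qj, qk] <;> ring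
  have piWe0 : ∀ p q : ℍ[ℝ], π (Wq p q * e 0) = p := by
    intro p q
    rw [Wq_mul_e0]
    simp only [map_add, map_smul]
    rw [h2, h3', h8', h5, h12', h9, h16', h13]
    refine Quaternion.ext _ _ ?_ ?_ ?_ ?_ <;> simp only [Quaternion.re_add, Quaternion.imI_add, Quaternion.imJ_add, Quaternion.imK_add, Quaternion.re_neg, Quaternion.imI_neg, Quaternion.imJ_neg, Quaternion.imK_neg, Quaternion.re_smul, Quaternion.imI_smul, Quaternion.imJ_smul, Quaternion.imK_smul] <;> simp [qi, qj, qk] <;> ring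
  intro r hr a
  obtain ⟨s, rfl⟩ := Nat.exists_eq_succ_of_ne_zero hr.ne'
  rw [key s a]
  rcases Nat.even_or_odd s with hs | hs
  · rw [if_pos hs, piWe0]
  · rw [if_neg (Nat.not_even_iff_odd.mpr hs), mul_one, piW]
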